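/- Every n-dimensional polytope with n+2 vertices is either a pyramid (over a polytope with n+1 vertices in a hyperplane) or a generalized bipyramid: there exist an (n−1)-dimensional polytope B and two vertices v, w lying on strictly opposite sides of the hyperplane aff(B) such that the polytope equals conv([v,w] ∪ B). -/

import Mathlib

open Module

lemma aux_func {n : ℕ} (S : Set (Fin n → ℝ)) (hS : S.Nonempty)
    (h : affineSpan ℝ S ≠ ⊤) :
    ∃ (f : (Fin n → ℝ) →ₗ[ℝ] ℝ) (c : ℝ), f ≠ 0 ∧ (∀ x ∈ S, f x = c) ∧
      vectorSpan ℝ S ≤ LinearMap.ker f := by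
  obtain ⟨x0, hx0⟩ := hS
  have hv : vectorSpan ℝ S ≠ ⊤ := by
    intro hvt
    apply h
    rw [← AffineSubspace.direction_eq_top_iff_of_nonempty
      (s := affineSpan ℝ S) ⟨x0, mem_affineSpan ℝ hx0⟩, direction_affineSpan]
    exact hvt
  obtain ⟨f, hf0, hker⟩ := (vectorSpan ℝ S).exists_le_ker_of_lt_top (lt_top_iff_ne_top.2 hv)
  refine ⟨f, f x0, hf0, fun x hx => ?_, hker⟩
  have hm : x -ᵥ x0 ∈ vectorSpan ℝ S := vsub_mem_vectorSpan ℝ hx hx0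
  have := hker hm
  rw [LinearMap.mem_ker, vsub_eq_sub, map_sub, sub_eq_zero] at this
  exact this

lemma aux_ne {n : ℕ} {f : (Fin n → ℝ) →ₗ[ℝ] ℝ} (hf : f ≠ 0) {c : ℝ}
    {S : Set (Fin n → ℝ)} (hspan : affineSpan ℝ S = ⊤) (hc : ∀ x ∈ S, f x = c) : False := by
  have hH : S ⊆ (AffineSubspace.comap f.toAffineMap (affineSpan ℝ ({c} : Set ℝ)) : Set _) := by
    intro x hx
    rw [AffineSubspace.coe_comap, Set.mem_preimage]
    exact mem_affineSpan ℝ (by simp [hc x hx])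
  have hle := (affineSpan_le (k := ℝ)).2 hH
  rw [hspan] at hle
  have hall : ∀ x, f x = c := by
    intro x
    have hx := hle (AffineSubspace.mem_top ℝ _ x)
    rw [AffineSubspace.mem_comap,
      AffineSubspace.mem_affineSpan_singleton] at hx
    exact hx
  have h0 : c = 0 := by simpa using (hall 0).symm
  exact hf (LinearMap.ext fun x => by rw [hall x, h0, LinearMap.zero_apply])

theorem stmt6 (n : ℕ) (hn : 2 ≤ n) (V : Finset (Fin n → ℝ)) (hcard : V.card = n + 2)
    (hvert : ∀ v ∈ V, v ∉ convexHull ℝ (↑(V.erase v) : Set (Fin n → ℝ)))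
    (hint : (interior (convexHull ℝ (↑V : Set (Fin n → ℝ)))).Nonempty) :
    -- P is a pyramid: all vertices but one lie on a hyperplane missing the apex
    (∃ v ∈ V, ∃ (f : (Fin n → ℝ) →ₗ[ℝ] ℝ) (c : ℝ),
        (∀ x ∈ V.erase v, f x = c) ∧ f v ≠ c) ∨
    -- or P is a generalized bipyramid over an (n-1)-dimensional base B
    (∃ v ∈ V, ∃ w ∈ V, v ≠ w ∧ ∃ (B : Finset (Fin n → ℝ))
        (f : (Fin n → ℝ) →ₗ[ℝ] ℝ) (c : ℝ),
        (∀ x ∈ B, f x = c) ∧ f v < c ∧ c < f w ∧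
        Module.finrank ℝ (affineSpan ℝ (↑B : Set (Fin n → ℝ))).direction = n - 1 ∧
        convexHull ℝ (↑V : Set (Fin n → ℝ)) =
          convexHull ℝ (segment ℝ v w ∪ (↑B : Set (Fin n → ℝ)))) := by
  classical
  -- the affine span of V is everything
  have hspanV : affineSpan ℝ (↑V : Set (Fin n → ℝ)) = ⊤ := by
    rw [← affineSpan_convexHull]
    exact (convex_convexHull ℝ _).interior_nonempty_iff_affineSpan_eq_top.1 hint
  by_cases hpyr : ∃ v ∈ V, affineSpan ℝ (↑(V.erase v) : Set (Fin n → ℝ)) ≠ ⊤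
  · -- pyramid case
    obtain ⟨v, hv, hne⟩ := hpyr
    have hne' : (V.erase v).Nonempty := by
      rw [← Finset.card_pos, Finset.card_erase_of_mem hv, hcard]; omega
    obtain ⟨f, c, hf0, hc, -⟩ := aux_func _ (by exact_mod_cast hne') hne
    refine Or.inl ⟨v, hv, f, c, fun x hx => hc x (by exact_mod_cast hx), ?_⟩
    intro heq
    refine aux_ne hf0 (c := c) hspanV fun x hx => ?_
    by_cases hxv : x = v
    · rw [hxv]; exact heq
    · exact hc x (by exact_mod_cast Finset.mem_erase.2 ⟨hxv, Finset.mem_coe.1 hx⟩)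
  · push_neg at hpyr
    -- affine dependence among the vertices
    have hnAI : ¬ AffineIndependent ℝ (fun x : ↥V => (x : Fin n → ℝ)) := by
      intro hAI
      have h1 := hAI.card_le_finrank_succ
      have h2 : finrank ℝ (vectorSpan ℝ (Set.range (fun x : ↥V => (x : Fin n → ℝ)))) ≤ n := by
        simpa [finrank_fin_fun] using
          (Submodule.finrank_le (vectorSpan ℝ (Set.range (fun x : ↥V => (x : Fin n → ℝ)))))
      rw [Fintype.card_coe, hcard] at h1
      omega
    rw [affineIndependent_iff_of_fintype] at hnAI
    push_neg at hnAI
    obtain ⟨w0, hw0sum, hw0vsub, i0, hi0⟩ := hnAI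
    rw [Finset.univ.weightedVSub_eq_linear_combination hw0sum] at hw0vsub
    set a : (Fin n → ℝ) → ℝ := fun x => if h : x ∈ V then w0 ⟨x, h⟩ else 0 with ha
    have haeq : ∀ x : ↥V, a ↑x = w0 x := fun x => by
      simp only [ha, x.2, dif_pos, Subtype.coe_eta]
    have hasum : ∑ x ∈ V, a x = 0 := by
      rw [← Finset.sum_attach V a, Finset.sum_congr rfl (fun x _ => haeq x),
        ← Finset.univ_eq_attach]
      exact hw0sum
    have hacomb : ∑ x ∈ V, a x • x = 0 := by
      rw [← Finset.sum_attach V (fun x => a x • x),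
        Finset.sum_congr rfl (fun x _ => by rw [haeq x]), ← Finset.univ_eq_attach]
      exact hw0vsub
    have hex : ∃ x ∈ V, a x ≠ 0 := ⟨↑i0, i0.2, by rw [haeq i0]; exact hi0⟩
    -- find two distinct vertices with weights of the same sign
    have hpair : ∃ v ∈ V, ∃ w ∈ V, v ≠ w ∧ 0 < a v * a w := by
      by_contra hno
      push_neg at hno
      set T : Finset (Fin n → ℝ) := V.filter (fun x => a x ≠ 0) with hT
      have hkey : ∀ x ∈ T, ∀ y ∈ T, x ≠ y → a x * a y < 0 := by
        intro x hx y hy hxy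
        rw [hT, Finset.mem_filter] at hx hy
        exact lt_of_le_of_ne (hno x hx.1 y hy.1 hxy) (mul_ne_zero hx.2 hy.2)
      have hsumT : ∑ x ∈ T, a x = 0 := by
        rw [hT, Finset.sum_filter_ne_zero]; exact hasum
      have hcombT : ∑ x ∈ T, a x • x = 0 := by
        rw [hT, Finset.sum_filter_of_ne (fun x _ h => by
          intro h0; apply h; rw [h0, zero_smul])]
        exact hacomb
      obtain ⟨x0, hx0V, hx0a⟩ := hex
      have hx0T : x0 ∈ T := Finset.mem_filter.2 ⟨hx0V, hx0a⟩
      have hT1 : 1 ≤ T.card := Finset.card_pos.2 ⟨x0, hx0T⟩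
      have hTcard : T.card ≤ 2 := by
        by_contra hTc
        push_neg at hTc
        obtain ⟨x, hx, y, hy, hxy⟩ := Finset.one_lt_card.1 (show 1 < T.card by omega)
        have h2e : 1 < (T.erase x).card := by
          rw [Finset.card_erase_of_mem hx]; omega
        obtain ⟨y', hy', z, hz, hyz⟩ := Finset.one_lt_card.1 h2e
        have hy'T := Finset.mem_of_mem_erase hy'
        have hzT := Finset.mem_of_mem_erase hz
        have hxy' : x ≠ y' := fun h => (Finset.mem_erase.1 hy').1 h.symm
        have hxz : x ≠ z := fun h => (Finset.mem_erase.1 hz).1 h.symm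
        have h1 := hkey x hx y' hy'T hxy'
        have h2 := hkey y' hy'T z hzT hyz
        have h3 := hkey x hx z hzT hxz
        nlinarith [mul_pos_of_neg_of_neg h1 h2, h3, sq_nonneg (a y')]
      have hT12 : T.card = 1 ∨ T.card = 2 := by omega
      rcases hT12 with h | h
      · obtain ⟨x, hx⟩ := Finset.card_eq_one.1 h
        have hax0 : a x = 0 := by rw [hx, Finset.sum_singleton] at hsumT; exact hsumT
        have hxT : x ∈ T := by rw [hx]; exact Finset.mem_singleton_self x
        exact (Finset.mem_filter.1 hxT).2 hax0
      · obtain ⟨x, y, hxy, hxy2⟩ := Finset.card_eq_two.1 h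
        have hxT : x ∈ T := by rw [hxy2]; simp
        have hax : a x ≠ 0 := (Finset.mem_filter.1 hxT).2
        have hsx : a x + a y = 0 := by
          rw [hxy2, Finset.sum_insert (by simp [hxy]), Finset.sum_singleton] at hsumT
          exact hsumT
        have hcx : a x • x + a y • y = 0 := by
          rw [hxy2, Finset.sum_insert (by simp [hxy]), Finset.sum_singleton] at hcombT
          exact hcombT
        have hay : a y = -a x := by linarith
        have hzero : a x • (x - y) = 0 := by
          rw [hay, neg_smul] at hcx
          rw [smul_sub]
          linear_combination (norm := module) hcx
        rcases smul_eq_zero.1 hzero with h' | h'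
        · exact hax h'
        · exact hxy (by rwa [sub_eq_zero] at h')
    obtain ⟨v, hv, w, hw, hvw, hprod⟩ := hpair
    set B : Finset (Fin n → ℝ) := (V.erase v).erase w with hB
    have hwv : w ∈ V.erase v := Finset.mem_erase.2 ⟨fun h => hvw h.symm, hw⟩
    have hBcard : B.card = n := by
      rw [hB, Finset.card_erase_of_mem hwv, Finset.card_erase_of_mem hv, hcard]
      omega
    have hBne : B.Nonempty := Finset.card_pos.mp (by rw [hBcard]; omega)
    have hVv : V.erase v = insert w B := by
      rw [hB, Finset.insert_erase hwv]
    have hVw : V.erase w = insert v B := by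
      rw [hB, Finset.erase_right_comm, Finset.insert_erase (Finset.mem_erase.2 ⟨hvw, hv⟩)]
    have hVsplit : V = insert v (insert w B) := by
      rw [← hVv, Finset.insert_erase hv]
    have hwB : w ∉ B := by rw [hB]; exact Finset.notMem_erase w _
    have hvB' : v ∉ insert w B := by
      rw [← hVv]; exact Finset.notMem_erase v V
    -- B does not affinely span
    have hub : finrank ℝ (vectorSpan ℝ (↑B : Set (Fin n → ℝ))) ≤ n - 1 := by
      have h := finrank_vectorSpan_image_finset_le ℝ id B (n := n - 1) (by rw [hBcard]; omega)
      rwa [Finset.image_id] at h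
    have hBne_top : affineSpan ℝ (↑B : Set (Fin n → ℝ)) ≠ ⊤ := by
      intro htop
      have hvs : vectorSpan ℝ (↑B : Set (Fin n → ℝ)) = ⊤ :=
        AffineSubspace.vectorSpan_eq_top_of_affineSpan_eq_top ℝ _ _ htop
      rw [hvs, finrank_top, finrank_fin_fun] at hub
      omega
    obtain ⟨f, c, hf0, hfc, hker⟩ := aux_func _ (by exact_mod_cast hBne) hBne_top
    -- f v ≠ c and f w ≠ c
    have hfv : f v ≠ c := by
      intro heq
      refine aux_ne hf0 (c := c) (hpyr w hw) fun x hx => ?_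
      rw [hVw, Finset.coe_insert] at hx
      rcases Set.mem_insert_iff.1 hx with rfl | hxB
      · exact heq
      · exact hfc x hxB
    have hfw : f w ≠ c := by
      intro heq
      refine aux_ne hf0 (c := c) (hpyr v hv) fun x hx => ?_
      rw [hVv, Finset.coe_insert] at hx
      rcases Set.mem_insert_iff.1 hx with rfl | hxB
      · exact heq
      · exact hfc x hxB
    -- the sign equation
    have happ : ∑ x ∈ V, a x * (f x - c) = 0 := by
      have h1 : ∑ x ∈ V, a x * f x = 0 := by
        have := congrArg f hacomb
        rw [map_sum, map_zero] at this
        simpa only [map_smul, smul_eq_mul] using this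
      have h2 : ∑ x ∈ V, a x * c = 0 := by rw [← Finset.sum_mul, hasum, zero_mul]
      calc ∑ x ∈ V, a x * (f x - c)
          = (∑ x ∈ V, a x * f x) - ∑ x ∈ V, a x * c := by
            rw [← Finset.sum_sub_distrib]; exact Finset.sum_congr rfl fun x _ => by ring
        _ = 0 := by rw [h1, h2, sub_zero]
    have hsplit : a v * (f v - c) + a w * (f w - c) = 0 := by
      rw [hVsplit, Finset.sum_insert hvB', Finset.sum_insert hwB] at happ
      have hBzero : ∑ x ∈ B, a x * (f x - c) = 0 :=
        Finset.sum_eq_zero fun x hx => by rw [hfc x (Finset.mem_coe.2 hx)]; ring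
      rw [hBzero, add_zero] at happ
      linarith
    have hsign : (f v - c) * (f w - c) < 0 := by
      rcases lt_trichotomy ((f v - c) * (f w - c)) 0 with h | h | h
      · exact h
      · rcases mul_eq_zero.1 h with h' | h'
        · exact absurd (by linarith : f v = c) hfv
        · exact absurd (by linarith : f w = c) hfw
      · exfalso
        have e1 : a w * (f w - c) = -(a v * (f v - c)) := by linarith
        have e2 : (a v * a w) * ((f v - c) * (f w - c)) =
            -(a v * (f v - c))^2 := by
          calc (a v * a w) * ((f v - c) * (f w - c))
              = (a v * (f v - c)) * (a w * (f w - c)) := by ring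
            _ = -(a v * (f v - c))^2 := by rw [e1]; ring
        have e3 : 0 < (a v * a w) * ((f v - c) * (f w - c)) := mul_pos hprod h
        nlinarith [sq_nonneg (a v * (f v - c))]
    -- dimension of the base
    have hlb : n ≤ finrank ℝ (vectorSpan ℝ (↑B : Set (Fin n → ℝ))) + 1 := by
      obtain ⟨b0, hb0⟩ := hBne
      have htop := hpyr v hv
      rw [hVv, Finset.coe_insert] at htop
      have hins : affineSpan ℝ (insert w (↑B : Set (Fin n → ℝ))) =
          affineSpan ℝ (insert w ((affineSpan ℝ (↑B : Set (Fin n → ℝ))) : Set (Fin n → ℝ))) :=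
        (affineSpan_insert_affineSpan ℝ w (↑B : Set (Fin n → ℝ))).symm
      have hdir := AffineSubspace.direction_affineSpan_insert
        (k := ℝ) (s := affineSpan ℝ (↑B : Set (Fin n → ℝ))) (p₂ := w)
        (mem_affineSpan ℝ (Finset.mem_coe.2 hb0))
      rw [← hins, htop, AffineSubspace.direction_top] at hdir
      have hfr : finrank ℝ (⊤ : Submodule ℝ (Fin n → ℝ)) = n := by
        rw [finrank_top, finrank_fin_fun]
      rw [hdir] at hfr
      have hsup := Submodule.finrank_add_le_finrank_add_finrank
        (Submodule.span ℝ {w -ᵥ b0}) (affineSpan ℝ (↑B : Set (Fin n → ℝ))).direction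
      have hsing : finrank ℝ (Submodule.span ℝ ({w -ᵥ b0} : Set (Fin n → ℝ))) ≤ 1 := by
        by_cases hd : (w -ᵥ b0 : Fin n → ℝ) = 0
        · rw [hd, Submodule.span_zero_singleton, finrank_bot]; omega
        · rw [finrank_span_singleton hd]
      rw [direction_affineSpan] at hsup hfr
      omega
    have hdim : finrank ℝ (affineSpan ℝ (↑B : Set (Fin n → ℝ))).direction = n - 1 := by
      rw [direction_affineSpan]
      omega
    -- the convex hull equality
    have hhull : ∀ v' w' : Fin n → ℝ, ({v', w'} : Set (Fin n → ℝ)) ∪ ↑B = ↑V →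
        convexHull ℝ (↑V : Set (Fin n → ℝ)) =
          convexHull ℝ (segment ℝ v' w' ∪ (↑B : Set (Fin n → ℝ))) := by
      intro v' w' hunion
      rw [← convexHull_pair, convexHull_convexHull_union_left, hunion]
    have hunion : ({v, w} : Set (Fin n → ℝ)) ∪ ↑B = ↑V := by
      rw [hVsplit]
      simp only [Finset.coe_insert]
      rw [Set.insert_union, Set.singleton_union]
    have hunion' : ({w, v} : Set (Fin n → ℝ)) ∪ ↑B = ↑V := by
      rw [← hunion, Set.pair_comm]
    rcases lt_or_gt_of_ne (sub_ne_zero.2 hfv) with hvlt | hvgt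
    · -- f v < c, so f w > c
      have hwgt : c < f w := by nlinarith
      exact Or.inr ⟨v, hv, w, hw, hvw, B, f, c,
        (fun x hx => hfc x (Finset.mem_coe.2 hx)), by linarith, hwgt, hdim, hhull v w hunion⟩
    · -- f v > c, so f w < c
      have hwlt : f w < c := by nlinarith
      exact Or.inr ⟨w, hw, v, hv, hvw.symm, B, f, c,
        (fun x hx => hfc x (Finset.mem_coe.2 hx)), hwlt, by linarith, hdim, hhull w v hunion'⟩
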